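/- arXiv:1602.09013 — 3 statements merged into one kernel-verified Lean document; each statement's English description precedes it below -/
import Mathlib

section
/- In non-Gaussian CCA, x_1 = D_1α + ε_1 and x_2 = D_2α + ε_2 with α ⊥ (ε_1, ε_2) and ε_1 ⊥ ε_2, the cross-derivative of the joint cumulant generating function satisfies ∇_{t_1}∇_{t_2} K_x(t_1, t_2) = D_1 C_α(D_1⊤t_1 + D_2⊤t_2) D_2⊤, where C_α(h) is the Hessian of the CGF of α; in particular the generalized cross-covariance S_12(t) is independent of the noise distributions and has the diagonal form D_1 C_α(h(t)) D_2⊤ with C_α diagonal when α has independent components. -/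
open MeasureTheory ProbabilityTheory Real Matrix Filter
open scoped Topology

private lemma eventually_diff_of_contDiffAt {E : Type*} [NormedAddCommGroup E]
    [NormedSpace ℝ E] {f : E → ℝ} {x : E} (hf : ContDiffAt ℝ 2 f x) :
    ∀ᶠ y in 𝓝 x, DifferentiableAt ℝ f y := by
  obtain ⟨u, hu, hcd⟩ := hf.contDiffOn (m := 1) (by norm_num) (by simp)
  rcases mem_nhds_iff.1 hu with ⟨v, hvu, hv, hxv⟩
  filter_upwards [hv.mem_nhds hxv] with y hy
  exact ((hcd.mono hvu).differentiableOn (by norm_num)).differentiableAt (hv.mem_nhds hy)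

private lemma second_apply {E : Type*} [NormedAddCommGroup E] [NormedSpace ℝ E]
    {F : E → ℝ} {h : E} (hF : ContDiffAt ℝ 2 F h) (z w : E) :
    fderiv ℝ (fun u => fderiv ℝ F u z) h w = fderiv ℝ (fderiv ℝ F) h w z := by
  have dG : DifferentiableAt ℝ (fderiv ℝ F) h :=
    (hF.fderiv_right (m := 1) (by norm_num)).differentiableAt (by norm_num)
  have hc : HasFDerivAt (fun u => fderiv ℝ F u z)
      ((ContinuousLinearMap.apply ℝ ℝ z).comp (fderiv ℝ (fderiv ℝ F) h)) h := by
    exact (ContinuousLinearMap.apply ℝ ℝ z).hasFDerivAt.comp h dG.hasFDerivAt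
  rw [hc.fderiv]
  simp

private lemma part2_aux {K : ℕ} {F : (Fin K → ℝ) → ℝ} {f : Fin K → ℝ → ℝ} {h : Fin K → ℝ}
    (hF : ContDiffAt ℝ 2 F h) (heq : ∀ᶠ u in 𝓝 h, F u = ∑ k, f k (u k))
    {i j : Fin K} (hij : i ≠ j) :
    fderiv ℝ (fun u => fderiv ℝ F u (Pi.single j 1)) h (Pi.single i 1) = 0 := by
  have hupd : ∀ k : Fin K, (fun v : ℝ => Function.update h k v)
      = fun v => h + (v - h k) • (Pi.single k 1 : Fin K → ℝ) := by
    intro k; funext v l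
    by_cases hl : l = k
    · subst hl; simp
    · simp [Function.update_apply, hl, Pi.single_eq_of_ne hl]
  have hfk : ∀ k, ContDiffAt ℝ 2 (f k) (h k) := by
    intro k
    have haff : ContDiffAt ℝ 2 (fun v : ℝ => Function.update h k v) (h k) := by
      rw [hupd k]
      exact contDiffAt_const.add ((contDiffAt_id.sub contDiffAt_const).smul contDiffAt_const)
    have hcomp : ContDiffAt ℝ 2 (fun v => F (Function.update h k v)) (h k) := by
      have hs : Function.update h k (h k) = h := Function.update_eq_self k h
      exact ContDiffAt.comp (h k) (by rwa [hs]) haff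
    have hcont : Tendsto (fun v : ℝ => Function.update h k v) (𝓝 (h k)) (𝓝 h) := by
      rw [hupd k]
      exact (by continuity : Continuous fun v : ℝ => h + (v - h k) • (Pi.single k 1 : Fin K → ℝ)).tendsto'
        (h k) h (by simp)
    have hev : (fun v => F (Function.update h k v) - ∑ l ∈ Finset.univ.erase k, f l (h l))
        =ᶠ[𝓝 (h k)] f k := by
      filter_upwards [hcont.eventually heq] with v hv
      rw [hv, ← Finset.add_sum_erase _ _ (Finset.mem_univ k), Function.update_self]
      have hrest : ∑ l ∈ Finset.univ.erase k, f l (Function.update h k v l)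
          = ∑ l ∈ Finset.univ.erase k, f l (h l) := by
        refine Finset.sum_congr rfl fun l hl => ?_
        rw [Function.update_apply, if_neg (Finset.ne_of_mem_erase hl)]
      rw [hrest]; ring
    exact (hcomp.sub contDiffAt_const).congr_of_eventuallyEq hev.symm
  have hdiff : ∀ k, ∀ᶠ v in 𝓝 (h k), DifferentiableAt ℝ (f k) v :=
    fun k => eventually_diff_of_contDiffAt (hfk k)
  have hstep : ∀ᶠ u in 𝓝 h, fderiv ℝ F u (Pi.single j 1) = deriv (f j) (u j) := by
    have h2 : ∀ᶠ u in 𝓝 h, ∀ k, DifferentiableAt ℝ (f k) (u k) := by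
      rw [eventually_all]
      exact fun k => ((continuous_apply k).tendsto h).eventually (hdiff k)
    filter_upwards [eventually_eventually_nhds.2 heq, h2] with u hu hdu
    have hfd : HasFDerivAt (fun u' : Fin K → ℝ => ∑ k, f k (u' k))
        (∑ k, deriv (f k) (u k) • (ContinuousLinearMap.proj k : (Fin K → ℝ) →L[ℝ] ℝ)) u := by
      refine HasFDerivAt.fun_sum fun k _ => ?_
      have hproj : HasFDerivAt (fun u' : Fin K → ℝ => u' k)
          (ContinuousLinearMap.proj k : (Fin K → ℝ) →L[ℝ] ℝ) u :=
        (ContinuousLinearMap.proj k : (Fin K → ℝ) →L[ℝ] ℝ).hasFDerivAt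
      exact (hdu k).hasDerivAt.comp_hasFDerivAt u hproj
    rw [Filter.EventuallyEq.fderiv_eq hu, hfd.fderiv]
    simp only [ContinuousLinearMap.coe_sum', Finset.sum_apply,
      ContinuousLinearMap.coe_smul', Pi.smul_apply, ContinuousLinearMap.proj_apply,
      smul_eq_mul, Pi.single_apply, mul_ite, mul_one, mul_zero]
    simp
  rw [Filter.EventuallyEq.fderiv_eq hstep]
  have h1 : ContDiffAt ℝ 1 (fderiv ℝ (f j)) (h j) := (hfk j).fderiv_right (m := 1) (by norm_num)
  have dg : DifferentiableAt ℝ (deriv (f j)) (h j) := by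
    have h2 : DifferentiableAt ℝ (fderiv ℝ (f j)) (h j) := h1.differentiableAt (by norm_num)
    exact ((ContinuousLinearMap.apply ℝ ℝ (1:ℝ)).hasFDerivAt.comp (h j)
      h2.hasFDerivAt).differentiableAt
  have hfin : HasFDerivAt (fun u : Fin K → ℝ => deriv (f j) (u j))
      (deriv (deriv (f j)) (h j) • (ContinuousLinearMap.proj j : (Fin K → ℝ) →L[ℝ] ℝ)) h :=
    dg.hasDerivAt.comp_hasFDerivAt (f := fun u : Fin K → ℝ => u j) h
      ((ContinuousLinearMap.proj j : (Fin K → ℝ) →L[ℝ] ℝ).hasFDerivAt :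
        HasFDerivAt (fun u : Fin K → ℝ => u j) _ h)
  rw [hfin.fderiv]
  simp [Pi.single_eq_of_ne (Ne.symm hij)]

private lemma part1_aux {E₁ E₂ E : Type*}
    [NormedAddCommGroup E₁] [NormedSpace ℝ E₁]
    [NormedAddCommGroup E₂] [NormedSpace ℝ E₂]
    [NormedAddCommGroup E] [NormedSpace ℝ E]
    {Kx : E₁ → E₂ → ℝ} {Kα : E → ℝ} {A : E₁ → ℝ} {B : E₂ → ℝ}
    (L : E₁ × E₂ →L[ℝ] E) {t₁ : E₁} {t₂ : E₂}
    (hKα : ContDiffAt ℝ 2 Kα (L (t₁, t₂)))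
    (hA : DifferentiableAt ℝ A t₁)
    (heq : ∀ᶠ s in 𝓝 (t₁, t₂), Kx s.1 s.2 = Kα (L s) + A s.1 + B s.2)
    (v : E₁) (w : E₂) :
    fderiv ℝ (fun s₂ => fderiv ℝ (fun s₁ => Kx s₁ s₂) t₁ v) t₂ w
      = fderiv ℝ (fun u => fderiv ℝ Kα u (L (v, 0))) (L (t₁, t₂)) (L (0, w)) := by
  set h := L (t₁, t₂) with hh
  have hKαdiff : ∀ᶠ u in 𝓝 h, DifferentiableAt ℝ Kα u := eventually_diff_of_contDiffAt hKα
  have hcont2 : Tendsto (fun s₂ : E₂ => L (t₁, s₂)) (𝓝 t₂) (𝓝 h) := by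
    exact (L.continuous.comp (continuous_const.prodMk continuous_id)).tendsto' t₂ h rfl
  rw [nhds_prod_eq] at heq
  rcases Filter.eventually_prod_iff.1 heq with ⟨pa, hpa, pb, hpb, H⟩
  -- the inner CLMs
  set c : E₁ →L[ℝ] E := L.comp (ContinuousLinearMap.inl ℝ E₁ E₂) with hc
  set d : E₂ →L[ℝ] E := L.comp (ContinuousLinearMap.inr ℝ E₁ E₂) with hd
  have hcd : ∀ (s₁ : E₁) (s₂ : E₂), L (s₁, s₂) = c s₁ + L (0, s₂) := by
    intro s₁ s₂
    rw [hc]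
    simp only [ContinuousLinearMap.coe_comp', Function.comp_apply,
      ContinuousLinearMap.inl_apply, ← map_add]
    norm_num
  have step1 : ∀ᶠ s₂ in 𝓝 t₂, fderiv ℝ (fun s₁ => Kx s₁ s₂) t₁ v
      = fderiv ℝ Kα (L (t₁, s₂)) (c v) + fderiv ℝ A t₁ v := by
    filter_upwards [hpb, hcont2.eventually hKαdiff] with s₂ hs₂ hdK
    have heq' : (fun s₁ => Kx s₁ s₂) =ᶠ[𝓝 t₁]
        fun s₁ => Kα (L (s₁, s₂)) + A s₁ + B s₂ := by
      filter_upwards [hpa] with s₁ h1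
      exact H h1 hs₂
    rw [Filter.EventuallyEq.fderiv_eq heq']
    have hφ : HasFDerivAt (fun s₁ => L (s₁, s₂)) c t₁ := by
      have : HasFDerivAt (fun s₁ => c s₁ + L (0, s₂)) c t₁ := c.hasFDerivAt.add_const _
      exact this.congr_of_eventuallyEq (Filter.Eventually.of_forall fun s₁ => (hcd s₁ s₂))
    have h1 : HasFDerivAt (fun s₁ => Kα (L (s₁, s₂)))
        ((fderiv ℝ Kα (L (t₁, s₂))).comp c) t₁ := hdK.hasFDerivAt.comp t₁ hφ
    have h2 : HasFDerivAt (fun s₁ => Kα (L (s₁, s₂)) + A s₁ + B s₂)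
        ((fderiv ℝ Kα (L (t₁, s₂))).comp c + fderiv ℝ A t₁) t₁ :=
      (h1.add hA.hasFDerivAt).add_const _
    rw [h2.fderiv]
    simp
  rw [Filter.EventuallyEq.fderiv_eq step1]
  have dG : DifferentiableAt ℝ (fderiv ℝ Kα) h :=
    ((hKα.fderiv_right (m := 1) (by norm_num)).differentiableAt (by norm_num))
  set G := ContinuousLinearMap.apply ℝ ℝ (c v) with hG
  have houter : HasFDerivAt (fun u => fderiv ℝ Kα u (c v))
      (G.comp (fderiv ℝ (fderiv ℝ Kα) h)) h :=
    G.hasFDerivAt.comp h dG.hasFDerivAt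
  have hψ : HasFDerivAt (fun s₂ => L (t₁, s₂)) d t₂ := by
    have hdc : ∀ s₂ : E₂, L (t₁, s₂) = L (t₁, 0) + d s₂ := by
      intro s₂
      rw [hd]
      simp only [ContinuousLinearMap.coe_comp', Function.comp_apply,
        ContinuousLinearMap.inr_apply, ← map_add]
      norm_num
    have : HasFDerivAt (fun s₂ => L (t₁, 0) + d s₂) d t₂ := d.hasFDerivAt.const_add _
    exact this.congr_of_eventuallyEq (Filter.Eventually.of_forall hdc)
  have hout2 : HasFDerivAt (fun s₂ => fderiv ℝ Kα (L (t₁, s₂)) (c v) + fderiv ℝ A t₁ v)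
      ((G.comp (fderiv ℝ (fderiv ℝ Kα) h)).comp d) t₂ := by
    have := (houter.comp t₂ hψ).add_const (fderiv ℝ A t₁ v)
    simpa using this
  have hcv : c v = L (v, 0) := by
    rw [hc]; simp
  have hdw : d w = L (0, w) := by
    rw [hd]; simp
  rw [hout2.fderiv, ← hcv, ← hdw, houter.fderiv]
  simp


set_option maxHeartbeats 1000000 in
/-- Non-Gaussian CCA: for `x₁ = D₁α + ε₁`, `x₂ = D₂α + ε₂` with `α ⊥ (ε₁, ε₂)` and
`ε₁ ⊥ ε₂`, the mixed second derivative of the joint CGF satisfies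
`∇_{t₁}∇_{t₂} K_x(t₁,t₂) = D₁ C_α(D₁⊤t₁ + D₂⊤t₂) D₂⊤`, where `C_α` is the Hessian of the
CGF of `α`; in particular this generalized cross-covariance does not involve the noise
distributions, and `C_α` is diagonal since `α` has independent components. -/
theorem nonGaussian_CCA_generalized_cross_covariance {Ω : Type*} [MeasurableSpace Ω]
    (μ : Measure Ω) [IsProbabilityMeasure μ] {K M₁ M₂ : ℕ}
    (α : Ω → Fin K → ℝ) (ε₁ : Ω → Fin M₁ → ℝ) (ε₂ : Ω → Fin M₂ → ℝ)
    (x₁ : Ω → Fin M₁ → ℝ) (x₂ : Ω → Fin M₂ → ℝ)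
    (D₁ : Matrix (Fin M₁) (Fin K) ℝ) (D₂ : Matrix (Fin M₂) (Fin K) ℝ)
    (hx₁ : ∀ ω, x₁ ω = D₁.mulVec (α ω) + ε₁ ω)
    (hx₂ : ∀ ω, x₂ ω = D₂.mulVec (α ω) + ε₂ ω)
    (hmα : Measurable α) (hmε₁ : Measurable ε₁) (hmε₂ : Measurable ε₂)
    (hindepα : iIndepFun (fun k ω => α ω k) μ)
    (hindep₁ : IndepFun α (fun ω => (ε₁ ω, ε₂ ω)) μ)
    (hindep₂ : IndepFun ε₁ ε₂ μ)
    (t₁ : Fin M₁ → ℝ) (t₂ : Fin M₂ → ℝ)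
    (h : Fin K → ℝ) (hh : h = fun k => (∑ m, D₁ m k * t₁ m) + ∑ m, D₂ m k * t₂ m)
    (hintx : ∀ᶠ s in 𝓝 (t₁, t₂),
      Integrable (fun ω =>
        Real.exp ((∑ m, s.1 m * x₁ ω m) + ∑ m, s.2 m * x₂ ω m)) μ)
    (hintα : ∀ᶠ u in 𝓝 h, Integrable (fun ω => Real.exp (∑ k, u k * α ω k)) μ)
    (Kx : (Fin M₁ → ℝ) → (Fin M₂ → ℝ) → ℝ)
    (hKx : Kx = fun s₁ s₂ =>
      Real.log (∫ ω, Real.exp ((∑ m, s₁ m * x₁ ω m) + ∑ m, s₂ m * x₂ ω m) ∂μ))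
    (Kα : (Fin K → ℝ) → ℝ)
    (hKα : Kα = fun u => Real.log (∫ ω, Real.exp (∑ k, u k * α ω k) ∂μ))
    (hsmoothx : ContDiffAt ℝ 2 (fun s : (Fin M₁ → ℝ) × (Fin M₂ → ℝ) => Kx s.1 s.2) (t₁, t₂))
    (hsmoothα : ContDiffAt ℝ 2 Kα h) :
    (∀ (m₁ : Fin M₁) (m₂ : Fin M₂),
      fderiv ℝ (fun s₂ => fderiv ℝ (fun s₁ => Kx s₁ s₂) t₁ (Pi.single m₁ 1)) t₂
          (Pi.single m₂ 1)
        = ∑ i, ∑ j, D₁ m₁ i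
            * (fderiv ℝ (fun u => fderiv ℝ Kα u (Pi.single j 1)) h (Pi.single i 1))
            * D₂ m₂ j) ∧
    (∀ i j : Fin K, i ≠ j →
      fderiv ℝ (fun u => fderiv ℝ Kα u (Pi.single j 1)) h (Pi.single i 1) = 0) := by
  haveI : NeZero μ := ⟨IsProbabilityMeasure.ne_zero μ⟩
  -- the linear map L
  set L : ((Fin M₁ → ℝ) × (Fin M₂ → ℝ)) →L[ℝ] (Fin K → ℝ) :=
    LinearMap.toContinuousLinearMap
      (D₁.transpose.mulVecLin.comp (LinearMap.fst ℝ (Fin M₁ → ℝ) (Fin M₂ → ℝ))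
        + D₂.transpose.mulVecLin.comp (LinearMap.snd ℝ (Fin M₁ → ℝ) (Fin M₂ → ℝ)))
    with hLdef
  have hLapp : ∀ (s : (Fin M₁ → ℝ) × (Fin M₂ → ℝ)) (k : Fin K),
      L s k = (∑ m, D₁ m k * s.1 m) + ∑ m, D₂ m k * s.2 m := by
    intro s k
    simp [hLdef, Matrix.mulVecLin_apply, Matrix.mulVec, Matrix.vecMul,
      dotProduct, Matrix.transpose_apply, mul_comm]
  have hLh : L (t₁, t₂) = h := by
    funext k; rw [hh]; exact hLapp (t₁, t₂) k
  -- part 2 first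
  have heq2 : ∀ᶠ u in 𝓝 h,
      Kα u = ∑ k, (fun v => Real.log (mgf (fun ω => α ω k) μ v)) (u k) := by
    filter_upwards [hintα] with u hu
    have hX : iIndepFun (fun k ω => u k * α ω k) μ :=
      hindepα.comp (fun k (y : ℝ) => u k * y) (fun k => measurable_id.const_mul (u k))
    have hmgf := hX.mgf_sum (fun k => (hmα.eval).const_mul (u k)) Finset.univ (t := 1)
    have hL1 : mgf (∑ k, (fun ω => u k * α ω k)) μ 1
        = ∫ ω, Real.exp (∑ k, u k * α ω k) ∂μ := by
      simp [mgf, Finset.sum_apply]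
    have hR : ∀ k, mgf (fun ω => u k * α ω k) μ 1 = mgf (fun ω => α ω k) μ (u k) := by
      intro k; simp [mgf]
    have hpos : 0 < ∫ ω, Real.exp (∑ k, u k * α ω k) ∂μ := integral_exp_pos hu
    have hprod : ∫ ω, Real.exp (∑ k, u k * α ω k) ∂μ
        = ∏ k, mgf (fun ω => α ω k) μ (u k) := by
      rw [← hL1, hmgf]
      exact Finset.prod_congr rfl fun k _ => hR k
    have hne : ∀ k ∈ Finset.univ, mgf (fun ω => α ω k) μ (u k) ≠ 0 := by
      have : (∏ k, mgf (fun ω => α ω k) μ (u k)) ≠ 0 := by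
        rw [← hprod]; exact hpos.ne'
      intro k _
      exact Finset.prod_ne_zero_iff.1 this k (Finset.mem_univ k)
    rw [hKα]
    simp only
    rw [hprod]
    exact Real.log_prod hne
  have part2 : ∀ i j : Fin K, i ≠ j →
      fderiv ℝ (fun u => fderiv ℝ Kα u (Pi.single j 1)) h (Pi.single i 1) = 0 :=
    fun i j hij => part2_aux (f := fun k v => Real.log (mgf (fun ω => α ω k) μ v)) hsmoothα heq2 hij
  refine ⟨?_, part2⟩
  -- definitions of the noise CGFs
  set A : (Fin M₁ → ℝ) → ℝ :=
    fun s₁ => Real.log (∫ ω, Real.exp (∑ m, s₁ m * ε₁ ω m) ∂μ) with hAdef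
  set B : (Fin M₂ → ℝ) → ℝ :=
    fun s₂ => Real.log (∫ ω, Real.exp (∑ m, s₂ m * ε₂ ω m) ∂μ) with hBdef
  -- pointwise decomposition of the exponent
  have hpt : ∀ (s : (Fin M₁ → ℝ) × (Fin M₂ → ℝ)) (ω : Ω),
      (∑ m, s.1 m * x₁ ω m) + ∑ m, s.2 m * x₂ ω m
        = (∑ k, L s k * α ω k)
          + ((∑ m, s.1 m * ε₁ ω m) + (∑ m, s.2 m * ε₂ ω m)) := by
    intro s ω
    have e1 : ∑ m, s.1 m * x₁ ω m
        = (∑ k, (∑ m, D₁ m k * s.1 m) * α ω k) + ∑ m, s.1 m * ε₁ ω m := by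
      have : ∀ m, s.1 m * x₁ ω m
          = (∑ k, s.1 m * (D₁ m k * α ω k)) + s.1 m * ε₁ ω m := by
        intro m
        rw [hx₁]
        simp [Matrix.mulVec, dotProduct, Finset.mul_sum, mul_add]
      rw [Finset.sum_congr rfl fun m _ => this m, Finset.sum_add_distrib,
        Finset.sum_comm]
      congr 1
      refine Finset.sum_congr rfl fun k _ => ?_
      rw [Finset.sum_mul]
      exact Finset.sum_congr rfl fun m _ => by ring
    have e2 : ∑ m, s.2 m * x₂ ω m
        = (∑ k, (∑ m, D₂ m k * s.2 m) * α ω k) + ∑ m, s.2 m * ε₂ ω m := by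
      have : ∀ m, s.2 m * x₂ ω m
          = (∑ k, s.2 m * (D₂ m k * α ω k)) + s.2 m * ε₂ ω m := by
        intro m
        rw [hx₂]
        simp [Matrix.mulVec, dotProduct, Finset.mul_sum, mul_add]
      rw [Finset.sum_congr rfl fun m _ => this m, Finset.sum_add_distrib,
        Finset.sum_comm]
      congr 1
      refine Finset.sum_congr rfl fun k _ => ?_
      rw [Finset.sum_mul]
      exact Finset.sum_congr rfl fun m _ => by ring
    have e3 : ∑ k, L s k * α ω k
        = (∑ k, (∑ m, D₁ m k * s.1 m) * α ω k)
          + ∑ k, (∑ m, D₂ m k * s.2 m) * α ω k := by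
      rw [← Finset.sum_add_distrib]
      refine Finset.sum_congr rfl fun k _ => ?_
      rw [hLapp s k]; ring
    rw [e1, e2, e3]; ring
  -- the factorization of Kx near (t₁, t₂)
  have heq : ∀ᶠ s in 𝓝 (t₁, t₂), Kx s.1 s.2 = Kα (L s) + A s.1 + B s.2 := by
    filter_upwards [hintx] with s hs
    have hφ : Measurable (fun y : Fin K → ℝ => Real.exp (∑ k, L s k * y k)) := by
      fun_prop
    have hψ : Measurable (fun p : (Fin M₁ → ℝ) × (Fin M₂ → ℝ) =>
        Real.exp ((∑ m, s.1 m * p.1 m) + ∑ m, s.2 m * p.2 m)) := by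
      fun_prop
    have hφ₁ : Measurable (fun y : Fin M₁ → ℝ => Real.exp (∑ m, s.1 m * y m)) := by
      fun_prop
    have hφ₂ : Measurable (fun y : Fin M₂ → ℝ => Real.exp (∑ m, s.2 m * y m)) := by
      fun_prop
    have hind1 : IndepFun (fun ω => Real.exp (∑ k, L s k * α ω k))
        (fun ω => Real.exp ((∑ m, s.1 m * ε₁ ω m) + ∑ m, s.2 m * ε₂ ω m)) μ :=
      hindep₁.comp hφ hψ
    have hind2 : IndepFun (fun ω => Real.exp (∑ m, s.1 m * ε₁ ω m))
        (fun ω => Real.exp (∑ m, s.2 m * ε₂ ω m)) μ := hindep₂.comp hφ₁ hφ₂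
    have hm0 : AEStronglyMeasurable (fun ω => Real.exp (∑ k, L s k * α ω k)) μ :=
      (hφ.comp hmα).aestronglyMeasurable
    have hm1 : AEStronglyMeasurable (fun ω => Real.exp (∑ m, s.1 m * ε₁ ω m)) μ :=
      (hφ₁.comp hmε₁).aestronglyMeasurable
    have hm2 : AEStronglyMeasurable (fun ω => Real.exp (∑ m, s.2 m * ε₂ ω m)) μ :=
      (hφ₂.comp hmε₂).aestronglyMeasurable
    have hm12 : AEStronglyMeasurable
        (fun ω => Real.exp ((∑ m, s.1 m * ε₁ ω m) + ∑ m, s.2 m * ε₂ ω m)) μ :=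
      ((hψ.comp (hmε₁.prodMk hmε₂))).aestronglyMeasurable
    have hsplit : ∫ ω, Real.exp ((∑ m, s.1 m * x₁ ω m) + ∑ m, s.2 m * x₂ ω m) ∂μ
        = (∫ ω, Real.exp (∑ k, L s k * α ω k) ∂μ)
          * ((∫ ω, Real.exp (∑ m, s.1 m * ε₁ ω m) ∂μ)
            * (∫ ω, Real.exp (∑ m, s.2 m * ε₂ ω m) ∂μ)) := by
      have h1 : ∫ ω, Real.exp ((∑ m, s.1 m * x₁ ω m) + ∑ m, s.2 m * x₂ ω m) ∂μ
          = ∫ ω, Real.exp (∑ k, L s k * α ω k)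
              * Real.exp ((∑ m, s.1 m * ε₁ ω m) + ∑ m, s.2 m * ε₂ ω m) ∂μ := by
        refine integral_congr_ae (Filter.Eventually.of_forall fun ω => ?_)
        simp only [hpt s ω, Real.exp_add]
      have h2 := hind1.integral_mul_eq_mul_integral hm0 hm12
      have h3 : ∫ ω, Real.exp ((∑ m, s.1 m * ε₁ ω m) + ∑ m, s.2 m * ε₂ ω m) ∂μ
          = ∫ ω, Real.exp (∑ m, s.1 m * ε₁ ω m)
              * Real.exp (∑ m, s.2 m * ε₂ ω m) ∂μ := by
        refine integral_congr_ae (Filter.Eventually.of_forall fun ω => ?_)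
        simp only [Real.exp_add]
      have h4 := hind2.integral_mul_eq_mul_integral hm1 hm2
      rw [h1]
      calc ∫ ω, Real.exp (∑ k, L s k * α ω k)
              * Real.exp ((∑ m, s.1 m * ε₁ ω m) + ∑ m, s.2 m * ε₂ ω m) ∂μ
          = (∫ ω, Real.exp (∑ k, L s k * α ω k) ∂μ)
            * ∫ ω, Real.exp ((∑ m, s.1 m * ε₁ ω m) + ∑ m, s.2 m * ε₂ ω m) ∂μ := h2
        _ = _ := by rw [h3]; exact congrArg _ h4
    have hpos : 0 < ∫ ω, Real.exp ((∑ m, s.1 m * x₁ ω m) + ∑ m, s.2 m * x₂ ω m) ∂μ :=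
      integral_exp_pos hs
    rw [hsplit] at hpos
    have hQα : (∫ ω, Real.exp (∑ k, L s k * α ω k) ∂μ) ≠ 0 :=
      fun hz => by simp [hz] at hpos
    have hQ1 : (∫ ω, Real.exp (∑ m, s.1 m * ε₁ ω m) ∂μ) ≠ 0 := by
      intro hz; rw [hz] at hpos; simp at hpos
    have hQ2 : (∫ ω, Real.exp (∑ m, s.2 m * ε₂ ω m) ∂μ) ≠ 0 := by
      intro hz; rw [hz] at hpos; simp at hpos
    rw [hKx, hKα]
    simp only
    rw [hsplit, Real.log_mul hQα (mul_ne_zero hQ1 hQ2), Real.log_mul hQ1 hQ2,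
      hAdef, hBdef]
    ring
  -- differentiability of A at t₁
  have hKαL : ContDiffAt ℝ 2 (fun s : (Fin M₁ → ℝ) × (Fin M₂ → ℝ) => Kα (L s)) (t₁, t₂) := by
    have h0 : ContDiffAt ℝ 2 Kα (L (t₁, t₂)) := by rwa [hLh]
    exact h0.comp (t₁, t₂) L.contDiff.contDiffAt
  have hAB : ContDiffAt ℝ 2
      (fun s : (Fin M₁ → ℝ) × (Fin M₂ → ℝ) => A s.1 + B s.2) (t₁, t₂) := by
    refine (hsmoothx.sub hKαL).congr_of_eventuallyEq ?_
    filter_upwards [heq] with s hs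
    rw [hs]; ring
  have hA : DifferentiableAt ℝ A t₁ := by
    have h0 : ContDiffAt ℝ 2 ((fun s : (Fin M₁ → ℝ) × (Fin M₂ → ℝ) => A s.1 + B s.2)
        ∘ (fun s₁ : Fin M₁ → ℝ => (s₁, t₂))) t₁ :=
      hAB.comp t₁ (contDiffAt_id.prodMk contDiffAt_const)
    have h1 : ContDiffAt ℝ 2 (fun s₁ : Fin M₁ → ℝ => A s₁ + B t₂) t₁ :=
      h0.congr_of_eventuallyEq (Filter.Eventually.of_forall fun s₁ => rfl)
    have h2 : ContDiffAt ℝ 2 (fun s₁ : Fin M₁ → ℝ => A s₁ + B t₂ - B t₂) t₁ :=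
      h1.sub contDiffAt_const
    have h3 : (fun s₁ : Fin M₁ → ℝ => A s₁ + B t₂ - B t₂) = A := by
      funext s₁; ring
    rw [h3] at h2
    exact h2.differentiableAt (by norm_num)
  -- main computation
  intro m₁ m₂
  have hKα2 : ContDiffAt ℝ 2 Kα (L (t₁, t₂)) := by rwa [hLh]
  have hmain := part1_aux L hKα2 hA heq (Pi.single m₁ 1) (Pi.single m₂ 1)
  rw [hLh] at hmain
  have hv : L (Pi.single m₁ 1, 0) = fun k => D₁ m₁ k := by
    funext k
    rw [hLapp]
    simp [Pi.single_apply]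
  have hw : L (0, Pi.single m₂ 1) = fun k => D₂ m₂ k := by
    funext k
    rw [hLapp]
    simp [Pi.single_apply]
  have hsym := hsmoothα.isSymmSndFDerivAt (by simp [minSmoothness_of_isRCLikeNormedField])
  have hz1 : (fun k => D₁ m₁ k) = ∑ b : Fin K, D₁ m₁ b • (Pi.single b 1 : Fin K → ℝ) := by
    funext k
    simp [Finset.sum_apply, Pi.single_apply]
  have hz2 : (fun k => D₂ m₂ k) = ∑ a : Fin K, D₂ m₂ a • (Pi.single a 1 : Fin K → ℝ) := by
    funext k
    simp [Finset.sum_apply, Pi.single_apply]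
  have htar : ∀ i j : Fin K,
      fderiv ℝ (fun u => fderiv ℝ Kα u (Pi.single j 1)) h (Pi.single i 1)
        = fderiv ℝ (fderiv ℝ Kα) h (Pi.single i 1) (Pi.single j 1) :=
    fun i j => second_apply hsmoothα _ _
  rw [hmain, hv, hw, second_apply hsmoothα, hz1, hz2]
  simp only [map_sum, _root_.map_smul, _root_.map_smul, ContinuousLinearMap.coe_sum', Finset.sum_apply,
    ContinuousLinearMap.coe_smul', Pi.smul_apply, smul_eq_mul, htar]
  refine Finset.sum_congr rfl fun i _ => ?_
  rw [Finset.mul_sum]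
  refine Finset.sum_congr rfl fun j _ => ?_
  rw [hsym.eq]
  ring
end

section
/- If W_1, W_2 are whitening matrices of a rank-K matrix S_12 (i.e., W_1 S_12 W_2⊤ = I_K), then for any invertible Q ∈ ℝ^{K×K}, the pair (Q W_1, Q^{-⊤} W_2) also whitens S_12; conversely, any other pair of whitening matrices (W̃_1, W̃_2) with rows spanning the same row spaces satisfies W̃_1 = Q W_1 and W̃_2 = Q^{-⊤} W_2 for some invertible Q. -/
open Matrix

lemma exists_factor {K n : ℕ} (A B : Matrix (Fin K) (Fin n) ℝ)
    (h : ∀ i, A i ∈ Submodule.span ℝ (Set.range fun j => B j)) :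
    ∃ C : Matrix (Fin K) (Fin K) ℝ, A = C * B := by
  have hc : ∀ i, ∃ c : Fin K → ℝ, ∑ j, c j • B j = A i := fun i =>
    Submodule.mem_span_range_iff_exists_fun ℝ |>.mp (h i)
  choose c hcspec using hc
  refine ⟨Matrix.of c, ?_⟩
  ext i k
  have := congrFun (hcspec i) k
  simp only [Finset.sum_apply, Pi.smul_apply, smul_eq_mul] at this
  simpa [Matrix.mul_apply] using this.symm

/-- If `(W₁, W₂)` whitens a rank-`K` matrix `S₁₂` (`W₁ S₁₂ W₂⊤ = I_K`), then for any
invertible `Q`, the pair `(Q W₁, Q⁻⊤ W₂)` also whitens `S₁₂`; conversely, any other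
whitening pair `(W₁', W₂')` whose rows span the same row spaces satisfies `W₁' = Q W₁`
and `W₂' = Q⁻⊤ W₂` for some invertible `Q`. -/
theorem whitening_matrices_ambiguity {M₁ M₂ K : ℕ}
    (S₁₂ : Matrix (Fin M₁) (Fin M₂) ℝ) (hrank : S₁₂.rank = K)
    (W₁ : Matrix (Fin K) (Fin M₁) ℝ) (W₂ : Matrix (Fin K) (Fin M₂) ℝ)
    (hW : W₁ * S₁₂ * W₂ᵀ = 1) :
    (∀ Q : Matrix (Fin K) (Fin K) ℝ, IsUnit Q →
      (Q * W₁) * S₁₂ * ((Q⁻¹)ᵀ * W₂)ᵀ = 1) ∧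
    (∀ (W₁' : Matrix (Fin K) (Fin M₁) ℝ) (W₂' : Matrix (Fin K) (Fin M₂) ℝ),
      W₁' * S₁₂ * W₂'ᵀ = 1 →
      Submodule.span ℝ (Set.range fun i => W₁' i) = Submodule.span ℝ (Set.range fun i => W₁ i) →
      Submodule.span ℝ (Set.range fun i => W₂' i) = Submodule.span ℝ (Set.range fun i => W₂ i) →
      ∃ Q : Matrix (Fin K) (Fin K) ℝ, IsUnit Q ∧ W₁' = Q * W₁ ∧ W₂' = (Q⁻¹)ᵀ * W₂) := by
  constructor
  · intro Q hQ
    have : (Q * W₁) * S₁₂ * ((Q⁻¹)ᵀ * W₂)ᵀ = Q * (W₁ * S₁₂ * W₂ᵀ) * Q⁻¹ := by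
      simp [Matrix.transpose_mul, Matrix.mul_assoc]
    rw [this, hW, Matrix.mul_one, Matrix.mul_nonsing_inv _ (isUnit_iff_isUnit_det _ |>.mp hQ)]
  · intro W₁' W₂' hW' h1 h2
    obtain ⟨A, hA⟩ := exists_factor W₁' W₁ (fun i => h1 ▸ Submodule.subset_span ⟨i, rfl⟩)
    obtain ⟨B, hB⟩ := exists_factor W₂' W₂ (fun i => h2 ▸ Submodule.subset_span ⟨i, rfl⟩)
    have hAB : A * Bᵀ = 1 := by
      have : W₁' * S₁₂ * W₂'ᵀ = A * (W₁ * S₁₂ * W₂ᵀ) * Bᵀ := by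
        rw [hA, hB]; simp [Matrix.transpose_mul, Matrix.mul_assoc]
      rw [this, hW, Matrix.mul_one] at hW'
      exact hW'
    have hu : IsUnit A := (isUnit_iff_isUnit_det A).mpr (Matrix.isUnit_det_of_right_inverse hAB)
    refine ⟨A, hu, hA, ?_⟩
    have hinv : A⁻¹ = Bᵀ := inv_eq_right_inv hAB
    rw [hB, hinv, Matrix.transpose_transpose]
end

section
/- In mixed CCA, where x_1 = D_1α + ε_1 (continuous view) and x_2 | α, ε_2 ~ Poisson(D_2α + ε_2) (discrete view) with α ⊥ (ε_1, ε_2), ε_1 ⊥ ε_2, the joint cumulant generating function decomposes as K_x(t_1, t_2) = log E[e^{α⊤h(t)}] + log E[e^{ε_2⊤(e^{t_2}−1)}] + log E[e^{t_1⊤ε_1}], where h(t) = D_1⊤t_1 + D_2⊤(e^{t_2} − 1); consequently the generalized cross-covariance satisfies S_12(t) := ∇_{t_2}∇_{t_1}K_x(t) = D_1 C_α(h(t)) (diag[e^{t_2}] D_2)⊤. -/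
open MeasureTheory ProbabilityTheory Real Filter
open scoped ENNReal NNReal

lemma lintegral_pi_fin_prod : ∀ {n : ℕ} (μ : Fin n → Measure ℕ),
    (∀ i, SigmaFinite (μ i)) → ∀ (f : Fin n → ℕ → ℝ≥0∞), (∀ i, Measurable (f i)) →
    ∫⁻ x : Fin n → ℕ, ∏ i, f i (x i) ∂Measure.pi μ = ∏ i, ∫⁻ k, f i k ∂(μ i) := by
  intro n
  induction n with
  | zero => intro μ _ f _; simp [lintegral_const, Measure.pi_empty_univ]
  | succ n ih =>
    intro μ hσ f hf
    have := hσ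
    have A := ((measurePreserving_piFinSuccAbove μ 0).symm)
    rw [← A.lintegral_comp (f := fun x => ∏ i, f i (x i))
      (Finset.univ.measurable_prod fun i _ => (hf i).comp (measurable_pi_apply i))]
    simp only [MeasurableEquiv.piFinSuccAbove_symm_apply, Fin.insertNthEquiv,
      Fin.prod_univ_succ, Fin.insertNth_zero, Equiv.coe_fn_mk, Fin.cons_succ,
      Fin.zero_succAbove, Fin.cons_zero, cast_eq]
    rw [lintegral_prod_mul (f := f 0) (g := fun y : Fin n → ℕ => ∏ x : Fin n, f x.succ (y x))
      (hf 0).aemeasurable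
      (Finset.univ.measurable_prod fun i _ =>
        ((hf i.succ).comp (measurable_pi_apply i))).aemeasurable]
    rw [ih _ (fun i => hσ _) _ (fun i => hf _)]

lemma poisson_mgf (r : ℝ≥0) (t : ℝ) :
    ∫⁻ n, ENNReal.ofReal (Real.exp (t * n)) ∂poissonMeasure r
      = ENNReal.ofReal (Real.exp ((r : ℝ) * (Real.exp t - 1))) := by
  have hsum : HasSum (fun n : ℕ => Real.exp (t * n) * poissonPMFReal r n)
      (Real.exp ((r : ℝ) * (Real.exp t - 1))) := by
    have h1 : HasSum (fun n : ℕ => ((r : ℝ) * Real.exp t) ^ n / n.factorial)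
        (NormedSpace.exp ((r : ℝ) * Real.exp t)) :=
      NormedSpace.expSeries_div_hasSum_exp ((r : ℝ) * Real.exp t)
    have h2 := h1.mul_left (Real.exp (-(r : ℝ)))
    have hval : Real.exp (-(r : ℝ)) * NormedSpace.exp ((r : ℝ) * Real.exp t)
        = Real.exp ((r : ℝ) * (Real.exp t - 1)) := by
      rw [← Real.exp_eq_exp_ℝ, ← Real.exp_add]; congr 1; ring
    have hfun : (fun n : ℕ => Real.exp (t * n) * poissonPMFReal r n)
        = fun n : ℕ => Real.exp (-(r : ℝ)) * (((r : ℝ) * Real.exp t) ^ n / n.factorial) := by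
      funext n
      unfold poissonPMFReal
      rw [mul_pow, ← Real.exp_nat_mul, mul_comm (n : ℝ) t]
      ring
    rw [hval] at h2
    rw [hfun]
    exact h2
  have hnn : ∀ n : ℕ, 0 ≤ Real.exp (t * n) * poissonPMFReal r n :=
    fun n => mul_nonneg (Real.exp_pos _).le poissonPMFReal_nonneg
  rw [lintegral_countable' (μ := poissonMeasure r) (fun n : ℕ => ENNReal.ofReal (Real.exp (t * n)))]
  have hμ : ∀ n : ℕ, poissonMeasure r {n} = ENNReal.ofReal (poissonPMFReal r n) := by
    intro n
    rw [poissonMeasure_singleton]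
    rfl
  calc ∑' n : ℕ, ENNReal.ofReal (Real.exp (t * n)) * poissonMeasure r {n}
      = ∑' n : ℕ, ENNReal.ofReal (Real.exp (t * n) * poissonPMFReal r n) := by
        refine tsum_congr fun n => ?_
        rw [hμ n, ← ENNReal.ofReal_mul (Real.exp_pos _).le]
    _ = ENNReal.ofReal (Real.exp ((r : ℝ) * (Real.exp t - 1))) := by
        rw [← ENNReal.ofReal_tsum_of_nonneg hnn hsum.summable, hsum.tsum_eq]

variable {K M₁ M₂ : ℕ}

lemma measurable_mulVec_fst (D₁ : Matrix (Fin M₁) (Fin K) ℝ) :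
    Measurable (fun p : (Fin K → ℝ) × ((Fin M₁ → ℝ) × (Fin M₂ → ℝ)) =>
      D₁.mulVec p.1 + p.2.1) := by
  refine measurable_pi_lambda _ fun m => ?_
  simp only [Pi.add_apply, Matrix.mulVec, dotProduct]
  exact (Finset.univ.measurable_sum fun k _ =>
    (measurable_const.mul ((measurable_pi_apply k).comp measurable_fst))).add
    ((measurable_pi_apply m).comp (measurable_fst.comp measurable_snd))

lemma measurable_rate (D₂ : Matrix (Fin M₂) (Fin K) ℝ) (m : Fin M₂) :
    Measurable (fun p : (Fin K → ℝ) × ((Fin M₁ → ℝ) × (Fin M₂ → ℝ)) =>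
      Real.toNNReal (D₂.mulVec p.1 m + p.2.2 m)) := by
  apply Measurable.real_toNNReal
  simp only [Matrix.mulVec, dotProduct]
  exact (Finset.univ.measurable_sum fun k _ =>
    (measurable_const.mul ((measurable_pi_apply k).comp measurable_fst))).add
    ((measurable_pi_apply m).comp (measurable_snd.comp measurable_snd))

lemma measurable_poisson_kernel (D₁ : Matrix (Fin M₁) (Fin K) ℝ)
    (D₂ : Matrix (Fin M₂) (Fin K) ℝ) :
    Measurable (fun p : (Fin K → ℝ) × ((Fin M₁ → ℝ) × (Fin M₂ → ℝ)) =>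
      (Measure.pi fun m =>
        poissonMeasure (Real.toNNReal (D₂.mulVec p.1 m + p.2.2 m))).map
          (Prod.mk (D₁.mulVec p.1 + p.2.1))) := by
  set c := fun p : (Fin K → ℝ) × ((Fin M₁ → ℝ) × (Fin M₂ → ℝ)) => D₁.mulVec p.1 + p.2.1 with hc
  set lam := fun (m : Fin M₂) (p : (Fin K → ℝ) × ((Fin M₁ → ℝ) × (Fin M₂ → ℝ))) =>
    Real.toNNReal (D₂.mulVec p.1 m + p.2.2 m) with hlam
  -- measurability of p ↦ pi-measure of a singleton
  have hsing : ∀ n : Fin M₂ → ℕ, Measurable (fun p =>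
      (Measure.pi fun m => poissonMeasure (lam m p)) {n}) := by
    intro n
    have heq : ∀ p, (Measure.pi fun m => poissonMeasure (lam m p)) {n}
        = ∏ m, ENNReal.ofReal (poissonPMFReal (lam m p) (n m)) := by
      intro p
      rw [← Set.univ_pi_singleton n, Measure.pi_pi]
      refine Finset.prod_congr rfl fun m _ => ?_
      rw [poissonMeasure_singleton]
      rfl
    simp only [heq]
    refine Finset.univ.measurable_prod fun m _ => ?_
    have hcont : Continuous (fun r : ℝ≥0 => ENNReal.ofReal (poissonPMFReal r (n m))) := by
      apply ENNReal.continuous_ofReal.comp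
      unfold poissonPMFReal
      fun_prop
    exact hcont.measurable.comp (measurable_rate D₂ m)
  refine Measure.measurable_of_measurable_coe _ fun s hs => ?_
  have key : ∀ p, ((Measure.pi fun m => poissonMeasure (lam m p)).map (Prod.mk (c p))) s
      = ∑' n : Fin M₂ → ℕ, ((fun p' => (c p', n)) ⁻¹' s).indicator
          (fun p' => (Measure.pi fun m => poissonMeasure (lam m p')) {n}) p := by
    intro p
    rw [Measure.map_apply measurable_prodMk_left hs]
    set T : Set (Fin M₂ → ℕ) := Prod.mk (c p) ⁻¹' s with hT
    have h1 : (Measure.pi fun m => poissonMeasure (lam m p)) T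
        = ∑' b : T, (Measure.pi fun m => poissonMeasure (lam m p)) {(b : Fin M₂ → ℕ)} := by
      have := tsum_measure_preimage_singleton
        (μ := Measure.pi fun m => poissonMeasure (lam m p)) (s := T)
        (T.to_countable) (f := id) (fun y _ => measurableSet_singleton y)
      simpa using this.symm
    rw [h1, tsum_subtype T (fun n => (Measure.pi fun m => poissonMeasure (lam m p)) {n})]
    refine tsum_congr fun n => ?_
    by_cases hn : (c p, n) ∈ s
    · rw [Set.indicator_of_mem (by exact hn) , Set.indicator_of_mem (by exact hn)]
    · rw [Set.indicator_of_notMem (by exact hn), Set.indicator_of_notMem (by exact hn)]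
  have key' : ∀ p : (Fin K → ℝ) × ((Fin M₁ → ℝ) × (Fin M₂ → ℝ)), ((Measure.pi fun m =>
        poissonMeasure (Real.toNNReal (D₂.mulVec p.1 m + p.2.2 m))).map
          (Prod.mk (D₁.mulVec p.1 + p.2.1))) s = _ := key
  simp only [key']
  refine Measurable.ennreal_tsum fun n => ?_
  exact (hsing n).indicator
    (((measurable_mulVec_fst D₁).prodMk measurable_const) hs)
open MeasureTheory ProbabilityTheory Real Filter
open scoped ENNReal NNReal

lemma cgf_factorization {K M₁ M₂ : ℕ}
    (μα : Measure (Fin K → ℝ)) [IsProbabilityMeasure μα]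
    (με₁ : Measure (Fin M₁ → ℝ)) [IsProbabilityMeasure με₁]
    (με₂ : Measure (Fin M₂ → ℝ)) [IsProbabilityMeasure με₂]
    (D₁ : Matrix (Fin M₁) (Fin K) ℝ) (D₂ : Matrix (Fin M₂) (Fin K) ℝ)
    (hnonneg : ∀ᵐ p ∂(μα.prod (με₁.prod με₂)), ∀ m, 0 ≤ D₂.mulVec p.1 m + p.2.2 m)
    (ν : Measure ((Fin M₁ → ℝ) × (Fin M₂ → ℕ)))
    (hν : ν = (μα.prod (με₁.prod με₂)).bind (fun p =>
      (Measure.pi fun m =>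
        poissonMeasure (Real.toNNReal (D₂.mulVec p.1 m + p.2.2 m))).map
          (Prod.mk (D₁.mulVec p.1 + p.2.1))))
    (s₁ : Fin M₁ → ℝ) (s₂ : Fin M₂ → ℝ)
    (hint1 : Integrable (fun q : (Fin M₁ → ℝ) × (Fin M₂ → ℕ) =>
        Real.exp ((∑ m, s₁ m * q.1 m) + ∑ m, s₂ m * (q.2 m : ℝ))) ν)
    (hint2 : Integrable (fun a : Fin K → ℝ =>
      Real.exp (∑ k, ((∑ m, D₁ m k * s₁ m) + ∑ m, D₂ m k * (Real.exp (s₂ m) - 1)) * a k)) μα)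
    (hint3 : Integrable (fun e : Fin M₂ → ℝ =>
      Real.exp (∑ m, (Real.exp (s₂ m) - 1) * e m)) με₂)
    (hint4 : Integrable (fun e : Fin M₁ → ℝ =>
      Real.exp (∑ m, s₁ m * e m)) με₁) :
    ∫ q, Real.exp ((∑ m, s₁ m * q.1 m) + ∑ m, s₂ m * (q.2 m : ℝ)) ∂ν
      = (∫ a, Real.exp (∑ k, ((∑ m, D₁ m k * s₁ m)
            + ∑ m, D₂ m k * (Real.exp (s₂ m) - 1)) * a k) ∂μα)
        * (∫ e, Real.exp (∑ m, (Real.exp (s₂ m) - 1) * e m) ∂με₂)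
        * (∫ e, Real.exp (∑ m, s₁ m * e m) ∂με₁) := by
  classical
  set ρ := μα.prod (με₁.prod με₂) with hρ
  set c := fun p : (Fin K → ℝ) × ((Fin M₁ → ℝ) × (Fin M₂ → ℝ)) => D₁.mulVec p.1 + p.2.1 with hcdef
  set lam := fun (m : Fin M₂) (p : (Fin K → ℝ) × ((Fin M₁ → ℝ) × (Fin M₂ → ℝ))) =>
    Real.toNNReal (D₂.mulVec p.1 m + p.2.2 m) with hlamdef
  set em : Fin M₂ → ℝ := fun m => Real.exp (s₂ m) - 1 with hemdef
  set hk : Fin K → ℝ := fun k => (∑ m, D₁ m k * s₁ m) + ∑ m, D₂ m k * em m with hhkdef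
  set f : (Fin M₁ → ℝ) × (Fin M₂ → ℕ) → ℝ :=
    fun q => Real.exp ((∑ m, s₁ m * q.1 m) + ∑ m, s₂ m * (q.2 m : ℝ)) with hfdef
  have hfm : Measurable f := by
    apply Measurable.exp
    refine Measurable.add ?_ ?_
    · exact Finset.univ.measurable_sum fun m _ =>
        measurable_const.mul ((measurable_pi_apply m).comp measurable_fst)
    · exact Finset.univ.measurable_sum fun m _ =>
        measurable_const.mul ((measurable_of_countable fun n : ℕ => (n : ℝ)).comp
          ((measurable_pi_apply m).comp measurable_snd))
  have hfm' : Measurable fun q => ENNReal.ofReal (f q) :=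
    ENNReal.measurable_ofReal.comp hfm
  have hκ := measurable_poisson_kernel D₁ D₂
  have h0 : ENNReal.ofReal (∫ q, f q ∂ν) = ∫⁻ q, ENNReal.ofReal (f q) ∂ν :=
    ofReal_integral_eq_lintegral_ofReal hint1
      (Filter.Eventually.of_forall fun q => (Real.exp_pos _).le)
  have hbind : ∫⁻ q, ENNReal.ofReal (f q) ∂ν
      = ∫⁻ p, ∫⁻ q, ENNReal.ofReal (f q)
          ∂((Measure.pi fun m => poissonMeasure (lam m p)).map (Prod.mk (c p))) ∂ρ := by
    rw [hν]
    exact Measure.lintegral_bind hκ.aemeasurable hfm'.aemeasurable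
  have hinner : ∀ p, ∫⁻ q, ENNReal.ofReal (f q)
        ∂((Measure.pi fun m => poissonMeasure (lam m p)).map (Prod.mk (c p)))
      = ENNReal.ofReal (Real.exp (∑ m, s₁ m * c p m))
          * ∏ m, ENNReal.ofReal (Real.exp ((lam m p : ℝ) * em m)) := by
    intro p
    rw [lintegral_map hfm' measurable_prodMk_left]
    have hsplit : ∀ n : Fin M₂ → ℕ, ENNReal.ofReal (f (c p, n))
        = ENNReal.ofReal (Real.exp (∑ m, s₁ m * c p m))
          * ∏ m, ENNReal.ofReal (Real.exp (s₂ m * (n m : ℝ))) := by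
      intro n
      rw [hfdef]
      simp only
      rw [Real.exp_add, ENNReal.ofReal_mul (Real.exp_pos _).le]
      congr 1
      rw [Real.exp_sum, ENNReal.ofReal_prod_of_nonneg (fun i _ => (Real.exp_pos _).le)]
    simp only [hsplit]
    rw [lintegral_const_mul _ (measurable_of_countable _),
      lintegral_pi_fin_prod _ (fun m => inferInstance)
        (fun m k => ENNReal.ofReal (Real.exp (s₂ m * (k : ℝ))))
        (fun m => measurable_of_countable _)]
    congr 1
    exact Finset.prod_congr rfl fun m _ => poisson_mgf (lam m p) (s₂ m)
  have hae : ∀ᵐ p ∂ρ,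
      ENNReal.ofReal (Real.exp (∑ m, s₁ m * c p m))
          * ∏ m, ENNReal.ofReal (Real.exp ((lam m p : ℝ) * em m))
        = ENNReal.ofReal (Real.exp (∑ k, hk k * p.1 k))
            * (ENNReal.ofReal (Real.exp (∑ m, s₁ m * p.2.1 m))
              * ENNReal.ofReal (Real.exp (∑ m, em m * p.2.2 m))) := by
    filter_upwards [hnonneg] with p hp
    have hco : ∀ m, ((lam m p : ℝ)) = D₂.mulVec p.1 m + p.2.2 m :=
      fun m => Real.coe_toNNReal _ (hp m)
    rw [← ENNReal.ofReal_prod_of_nonneg (fun i _ => (Real.exp_pos _).le), ← Real.exp_sum,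
      ← ENNReal.ofReal_mul (Real.exp_pos _).le, ← Real.exp_add,
      ← ENNReal.ofReal_mul (Real.exp_pos _).le, ← Real.exp_add,
      ← ENNReal.ofReal_mul (Real.exp_pos _).le, ← Real.exp_add]
    congr 1
    simp only [hco, hcdef, hhkdef, Pi.add_apply, Matrix.mulVec, dotProduct]
    have e1 : ∑ x : Fin M₁, s₁ x * ∑ k, D₁ x k * p.1 k
        = ∑ k, (∑ m, D₁ m k * s₁ m) * p.1 k := by
      simp_rw [Finset.mul_sum, Finset.sum_mul]
      rw [Finset.sum_comm]
      exact Finset.sum_congr rfl fun k _ => Finset.sum_congr rfl fun x _ => by ring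
    have e2 : ∑ x : Fin M₂, (∑ k, D₂ x k * p.1 k) * em x
        = ∑ k, (∑ m, D₂ m k * em m) * p.1 k := by
      simp_rw [Finset.sum_mul]
      rw [Finset.sum_comm]
      exact Finset.sum_congr rfl fun k _ => Finset.sum_congr rfl fun x _ => by ring
    have e3 : ∑ x : Fin M₂, p.2.2 x * em x = ∑ x : Fin M₂, em x * p.2.2 x :=
      Finset.sum_congr rfl fun x _ => mul_comm _ _
    simp only [mul_add, add_mul, Finset.sum_add_distrib]
    rw [e1, e2, e3]
    ring
  have measα : Measurable fun a : Fin K → ℝ => ENNReal.ofReal (Real.exp (∑ k, hk k * a k)) :=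
    ENNReal.measurable_ofReal.comp (Real.measurable_exp.comp
      (Finset.univ.measurable_sum fun k _ => measurable_const.mul (measurable_pi_apply k)))
  have meas1 : Measurable fun e : Fin M₁ → ℝ => ENNReal.ofReal (Real.exp (∑ m, s₁ m * e m)) :=
    ENNReal.measurable_ofReal.comp (Real.measurable_exp.comp
      (Finset.univ.measurable_sum fun m _ => measurable_const.mul (measurable_pi_apply m)))
  have meas2 : Measurable fun e : Fin M₂ → ℝ => ENNReal.ofReal (Real.exp (∑ m, em m * e m)) :=
    ENNReal.measurable_ofReal.comp (Real.measurable_exp.comp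
      (Finset.univ.measurable_sum fun m _ => measurable_const.mul (measurable_pi_apply m)))
  have hfactor : ∫⁻ p, ENNReal.ofReal (Real.exp (∑ k, hk k * p.1 k))
        * (ENNReal.ofReal (Real.exp (∑ m, s₁ m * p.2.1 m))
          * ENNReal.ofReal (Real.exp (∑ m, em m * p.2.2 m))) ∂ρ
      = (∫⁻ a, ENNReal.ofReal (Real.exp (∑ k, hk k * a k)) ∂μα)
        * ((∫⁻ e, ENNReal.ofReal (Real.exp (∑ m, s₁ m * e m)) ∂με₁)
          * (∫⁻ e, ENNReal.ofReal (Real.exp (∑ m, em m * e m)) ∂με₂)) := by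
    rw [hρ, lintegral_prod_mul (f := fun a : Fin K → ℝ => ENNReal.ofReal (Real.exp (∑ k, hk k * a k)))
      (g := fun y : (Fin M₁ → ℝ) × (Fin M₂ → ℝ) =>
        ENNReal.ofReal (Real.exp (∑ m, s₁ m * y.1 m))
          * ENNReal.ofReal (Real.exp (∑ m, em m * y.2 m)))
      measα.aemeasurable
      ((meas1.comp measurable_fst).mul (meas2.comp measurable_snd)).aemeasurable]
    congr 1
    exact lintegral_prod_mul (meas1.aemeasurable) (meas2.aemeasurable)
  have hIα := ofReal_integral_eq_lintegral_ofReal hint2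
      (Filter.Eventually.of_forall fun q => (Real.exp_pos _).le)
  have hI1 := ofReal_integral_eq_lintegral_ofReal hint4
      (Filter.Eventually.of_forall fun q => (Real.exp_pos _).le)
  have hI2 := ofReal_integral_eq_lintegral_ofReal hint3
      (Filter.Eventually.of_forall fun q => (Real.exp_pos _).le)
  have key : ENNReal.ofReal (∫ q, f q ∂ν)
      = ENNReal.ofReal ((∫ a, Real.exp (∑ k, hk k * a k) ∂μα)
          * (∫ e, Real.exp (∑ m, em m * e m) ∂με₂)
          * (∫ e, Real.exp (∑ m, s₁ m * e m) ∂με₁)) := by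
    rw [h0, hbind, lintegral_congr_ae (hae.mono fun p hp => (hinner p).trans hp), hfactor,
      ← hIα, ← hI1, ← hI2, ← ENNReal.ofReal_mul (integral_nonneg fun e => (Real.exp_pos _).le),
      ← ENNReal.ofReal_mul (integral_nonneg fun a => (Real.exp_pos _).le)]
    congr 1
    ring
  have := (ENNReal.ofReal_eq_ofReal_iff
    (integral_nonneg fun q => (Real.exp_pos _).le)
    (by
      have h1 : (0:ℝ) ≤ ∫ a, Real.exp (∑ k, hk k * a k) ∂μα :=
        integral_nonneg fun a => (Real.exp_pos _).le
      have h2 : (0:ℝ) ≤ ∫ e, Real.exp (∑ m, em m * e m) ∂με₂ :=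
        integral_nonneg fun a => (Real.exp_pos _).le
      have h3 : (0:ℝ) ≤ ∫ e, Real.exp (∑ m, s₁ m * e m) ∂με₁ :=
        integral_nonneg fun a => (Real.exp_pos _).le
      exact mul_nonneg (mul_nonneg h1 h2) h3)).mp key
  exact this

open MeasureTheory ProbabilityTheory Real Matrix Filter
open scoped Topology NNReal

set_option maxHeartbeats 2000000 in
/-- Mixed CCA: `x₁ = D₁α + ε₁` (continuous view) and, conditionally on `(α, ε₂)`,
`x₂` has independent Poisson components with mean `D₂α + ε₂`; the hidden variables
`α, ε₁, ε₂` are mutually independent (product base measure, `μα` itself a product of its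
marginals). Then the joint CGF decomposes as
`K_x(t₁,t₂) = log E[e^{α⊤h(t)}] + log E[e^{ε₂⊤(e^{t₂}−1)}] + log E[e^{t₁⊤ε₁}]` with
`h(t) = D₁⊤t₁ + D₂⊤(e^{t₂}−1)`, and the generalized cross-covariance satisfies
`S₁₂(t) = ∇_{t₂}∇_{t₁}K_x(t) = D₁ C_α(h(t)) (diag[e^{t₂}] D₂)⊤`. -/
theorem mixed_CCA_cgf_decomposition {K M₁ M₂ : ℕ}
    (μs : Fin K → Measure ℝ) [∀ k, IsProbabilityMeasure (μs k)]
    (μα : Measure (Fin K → ℝ)) (hμα : μα = Measure.pi μs) [IsProbabilityMeasure μα]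
    (με₁ : Measure (Fin M₁ → ℝ)) [IsProbabilityMeasure με₁]
    (με₂ : Measure (Fin M₂ → ℝ)) [IsProbabilityMeasure με₂]
    (D₁ : Matrix (Fin M₁) (Fin K) ℝ) (D₂ : Matrix (Fin M₂) (Fin K) ℝ)
    (hnonneg : ∀ᵐ p ∂(μα.prod (με₁.prod με₂)), ∀ m, 0 ≤ D₂.mulVec p.1 m + p.2.2 m)
    (ν : Measure ((Fin M₁ → ℝ) × (Fin M₂ → ℕ)))
    (hν : ν = (μα.prod (με₁.prod με₂)).bind (fun p =>
      (Measure.pi fun m =>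
        poissonMeasure (Real.toNNReal (D₂.mulVec p.1 m + p.2.2 m))).map
          (Prod.mk (D₁.mulVec p.1 + p.2.1))))
    (h : (Fin M₁ → ℝ) → (Fin M₂ → ℝ) → Fin K → ℝ)
    (hh : ∀ t₁ t₂, h t₁ t₂
      = fun k => (∑ m, D₁ m k * t₁ m) + ∑ m, D₂ m k * (Real.exp (t₂ m) - 1))
    (Kx : (Fin M₁ → ℝ) → (Fin M₂ → ℝ) → ℝ)
    (hKx : Kx = fun t₁ t₂ => Real.log (∫ q,
      Real.exp ((∑ m, t₁ m * q.1 m) + ∑ m, t₂ m * (q.2 m : ℝ)) ∂ν))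
    (Kα : (Fin K → ℝ) → ℝ)
    (hKα : Kα = fun u => Real.log (∫ a, Real.exp (∑ k, u k * a k) ∂μα)
    )
    -- integrability of all the moment generating functions involved
    (hint : ∀ (t₁ : Fin M₁ → ℝ) (t₂ : Fin M₂ → ℝ),
      Integrable (fun q : (Fin M₁ → ℝ) × (Fin M₂ → ℕ) =>
        Real.exp ((∑ m, t₁ m * q.1 m) + ∑ m, t₂ m * (q.2 m : ℝ))) ν ∧
      Integrable (fun a : Fin K → ℝ => Real.exp (∑ k, h t₁ t₂ k * a k)) μα ∧
      Integrable (fun e : Fin M₂ → ℝ =>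
        Real.exp (∑ m, (Real.exp (t₂ m) - 1) * e m)) με₂ ∧
      Integrable (fun e : Fin M₁ → ℝ => Real.exp (∑ m, t₁ m * e m)) με₁)
    (t₁ : Fin M₁ → ℝ) (t₂ : Fin M₂ → ℝ)
    (hsmoothx : ContDiffAt ℝ 2 (fun s : (Fin M₁ → ℝ) × (Fin M₂ → ℝ) => Kx s.1 s.2) (t₁, t₂))
    (hsmoothα : ContDiffAt ℝ 2 Kα (h t₁ t₂)) :
    (∀ (s₁ : Fin M₁ → ℝ) (s₂ : Fin M₂ → ℝ),
      Kx s₁ s₂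
        = Real.log (∫ a, Real.exp (∑ k, h s₁ s₂ k * a k) ∂μα)
          + Real.log (∫ e, Real.exp (∑ m, (Real.exp (s₂ m) - 1) * e m) ∂με₂)
          + Real.log (∫ e, Real.exp (∑ m, s₁ m * e m) ∂με₁)) ∧
    (∀ (m₁ : Fin M₁) (m₂ : Fin M₂),
      fderiv ℝ (fun s₂ => fderiv ℝ (fun s₁ => Kx s₁ s₂) t₁ (Pi.single m₁ 1)) t₂
          (Pi.single m₂ 1)
        = ∑ i, ∑ j, D₁ m₁ i
            * (fderiv ℝ (fun u => fderiv ℝ Kα u (Pi.single j 1)) (h t₁ t₂)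
                (Pi.single i 1))
            * (Real.exp (t₂ m₂) * D₂ m₂ j)) := by
  classical
  haveI : NeZero μα := ⟨IsProbabilityMeasure.ne_zero μα⟩
  haveI : NeZero με₁ := ⟨IsProbabilityMeasure.ne_zero με₁⟩
  haveI : NeZero με₂ := ⟨IsProbabilityMeasure.ne_zero με₂⟩
  -- Part 1
  have part1 : ∀ (s₁ : Fin M₁ → ℝ) (s₂ : Fin M₂ → ℝ),
      Kx s₁ s₂
        = Real.log (∫ a, Real.exp (∑ k, h s₁ s₂ k * a k) ∂μα)
          + Real.log (∫ e, Real.exp (∑ m, (Real.exp (s₂ m) - 1) * e m) ∂με₂)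
          + Real.log (∫ e, Real.exp (∑ m, s₁ m * e m) ∂με₁) := by
    intro s₁ s₂
    have hint2 : Integrable (fun a : Fin K → ℝ =>
        Real.exp (∑ k, ((∑ m, D₁ m k * s₁ m)
          + ∑ m, D₂ m k * (Real.exp (s₂ m) - 1)) * a k)) μα := by
      have := (hint s₁ s₂).2.1
      rwa [hh s₁ s₂] at this
    have hfac := cgf_factorization μα με₁ με₂ D₁ D₂ hnonneg ν hν s₁ s₂
      (hint s₁ s₂).1 hint2 (hint s₁ s₂).2.2.1 (hint s₁ s₂).2.2.2
    have pα : 0 < ∫ a, Real.exp (∑ k, ((∑ m, D₁ m k * s₁ m)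
        + ∑ m, D₂ m k * (Real.exp (s₂ m) - 1)) * a k) ∂μα := integral_exp_pos hint2
    have p2 : 0 < ∫ e, Real.exp (∑ m, (Real.exp (s₂ m) - 1) * e m) ∂με₂ :=
      integral_exp_pos (hint s₁ s₂).2.2.1
    have p1 : 0 < ∫ e, Real.exp (∑ m, s₁ m * e m) ∂με₁ :=
      integral_exp_pos (hint s₁ s₂).2.2.2
    rw [hKx]
    simp only
    rw [hfac, Real.log_mul (mul_pos pα p2).ne' p1.ne', Real.log_mul pα.ne' p2.ne', hh s₁ s₂]
  refine ⟨part1, ?_⟩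
  intro m₁ m₂
  -- notation
  set u₀ : Fin K → ℝ := h t₁ t₂ with hu₀
  set Bf : (Fin M₂ → ℝ) → ℝ :=
    fun s₂ => Real.log (∫ e, Real.exp (∑ m, (Real.exp (s₂ m) - 1) * e m) ∂με₂) with hBf
  set Cf : (Fin M₁ → ℝ) → ℝ :=
    fun s₁ => Real.log (∫ e, Real.exp (∑ m, s₁ m * e m) ∂με₁) with hCf
  have hdec : ∀ s₁ s₂, Kx s₁ s₂ = Kα (h s₁ s₂) + Bf s₂ + Cf s₁ := by
    intro s₁ s₂
    rw [part1 s₁ s₂, hKα]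
  -- the linear maps
  set L : (Fin M₁ → ℝ) →L[ℝ] (Fin K → ℝ) :=
    ContinuousLinearMap.pi (fun k => ∑ m, (D₁ m k) • ContinuousLinearMap.proj m) with hLdef
  set Ψ : (Fin M₂ → ℝ) →L[ℝ] (Fin K → ℝ) :=
    ContinuousLinearMap.pi
      (fun k => ∑ m, (D₂ m k * Real.exp (t₂ m)) • ContinuousLinearMap.proj m) with hΨdef
  set ψ : (Fin M₂ → ℝ) → (Fin K → ℝ) :=
    fun s₂ k => ∑ m, D₂ m k * (Real.exp (s₂ m) - 1) with hψdef
  have hLapp : ∀ v k, L v k = ∑ m, D₁ m k * v m := by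
    intro v k
    simp [hLdef, ContinuousLinearMap.proj]
  have hΨapp : ∀ v k, Ψ v k = ∑ m, D₂ m k * Real.exp (t₂ m) * v m := by
    intro v k
    simp [hΨdef, ContinuousLinearMap.proj, mul_assoc]
  have hh' : ∀ s₁ s₂, h s₁ s₂ = L s₁ + ψ s₂ := by
    intro s₁ s₂
    rw [hh s₁ s₂]
    funext k
    simp only [Pi.add_apply, hψdef]
    rw [hLapp]
  set w : Fin K → ℝ := fun k => D₁ m₁ k with hwdef
  have hL1 : L (Pi.single m₁ 1) = w := by
    funext k
    rw [hLapp, hwdef]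
    simp [Pi.single_apply, mul_ite, Finset.sum_ite_eq']
  -- derivative of s₂ ↦ h t₁ s₂
  have hΦ : HasFDerivAt (fun s₂ => h t₁ s₂) Ψ t₂ := by
    have hfun : (fun s₂ => h t₁ s₂)
        = fun s₂ => (fun k => (∑ m, D₁ m k * t₁ m) + ∑ m, D₂ m k * (Real.exp (s₂ m) - 1)) := by
      funext s₂; exact hh t₁ s₂
    rw [hfun, hasFDerivAt_pi']
    intro k
    have hco : HasFDerivAt
        (fun s₂ : Fin M₂ → ℝ => (∑ m, D₁ m k * t₁ m) + ∑ m, D₂ m k * (Real.exp (s₂ m) - 1))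
        (∑ m, (D₂ m k * Real.exp (t₂ m)) • (ContinuousLinearMap.proj m
          : (Fin M₂ → ℝ) →L[ℝ] ℝ)) t₂ := by
      refine HasFDerivAt.const_add _ ?_
      refine HasFDerivAt.fun_sum fun m _ => ?_
      have h1 : HasFDerivAt (fun s₂ : Fin M₂ → ℝ => Real.exp (s₂ m))
          (Real.exp (t₂ m) • (ContinuousLinearMap.proj m : (Fin M₂ → ℝ) →L[ℝ] ℝ)) t₂ :=
        by have := (Real.hasDerivAt_exp (t₂ m)).comp_hasFDerivAt t₂ (hasFDerivAt_apply (𝕜 := ℝ) m t₂); exact this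
      have h2 := (h1.sub_const 1).const_mul (D₂ m k)
      rw [smul_smul] at h2
      exact h2
    have heq : (∑ m, (D₂ m k * Real.exp (t₂ m)) • (ContinuousLinearMap.proj m
          : (Fin M₂ → ℝ) →L[ℝ] ℝ))
        = (ContinuousLinearMap.proj k).comp Ψ := by
      ext v
      simp [hΨdef, ContinuousLinearMap.proj]
    rw [← heq]
    exact hco
  -- eventual smoothness
  have hKα_ev : ∀ᶠ u in 𝓝 u₀, DifferentiableAt ℝ Kα u :=
    (hsmoothα.eventually (by norm_num)).mono fun u hu => hu.differentiableAt two_ne_zero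
  have hU : ∀ᶠ s₂ in 𝓝 t₂, DifferentiableAt ℝ Kα (h t₁ s₂) :=
    hΦ.continuousAt.tendsto.eventually hKα_ev
  -- differentiability of Cf at t₁
  have hinnerdiff : ∀ s₂, DifferentiableAt ℝ (fun s₁ => h s₁ s₂) t₁ := by
    intro s₂
    have : (fun s₁ => h s₁ s₂) = fun s₁ => L s₁ + ψ s₂ := funext fun s₁ => hh' s₁ s₂
    rw [this]
    exact (L.hasFDerivAt.add_const (ψ s₂)).differentiableAt
  have d1 : DifferentiableAt ℝ (fun s₁ => Kx s₁ t₂) t₁ := by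
    have := (hsmoothx.differentiableAt two_ne_zero).comp t₁
      ((differentiableAt_id.prodMk (differentiableAt_const t₂))
        : DifferentiableAt ℝ (fun s₁ : Fin M₁ → ℝ => (s₁, t₂)) t₁)
    exact this
  have d2 : DifferentiableAt ℝ (fun s₁ => Kα (h s₁ t₂)) t₁ := by
    have := (hsmoothα.differentiableAt two_ne_zero).comp t₁ (hinnerdiff t₂)
    exact this
  have hdCf : DifferentiableAt ℝ Cf t₁ := by
    have hfun : Cf = fun s₁ => Kx s₁ t₂ - Kα (h s₁ t₂) - Bf t₂ := by
      funext s₁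
      rw [hdec s₁ t₂]
      ring
    rw [hfun]
    exact (d1.sub d2).sub (differentiableAt_const _)
  set cC : ℝ := fderiv ℝ Cf t₁ (Pi.single m₁ 1) with hcC
  -- Step A : inner derivative, for s₂ near t₂
  have hstepA : ∀ᶠ s₂ in 𝓝 t₂,
      fderiv ℝ (fun s₁ => Kx s₁ s₂) t₁ (Pi.single m₁ 1)
        = fderiv ℝ Kα (h t₁ s₂) w + cC := by
    filter_upwards [hU] with s₂ hKαd
    have hinner : HasFDerivAt (fun s₁ => h s₁ s₂) (L : (Fin M₁ → ℝ) →L[ℝ] (Fin K → ℝ)) t₁ := by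
      have : (fun s₁ => h s₁ s₂) = fun s₁ => L s₁ + ψ s₂ := funext fun s₁ => hh' s₁ s₂
      rw [this]
      exact L.hasFDerivAt.add_const (ψ s₂)
    have hhs : HasFDerivAt (fun s₁ => Kα (h s₁ s₂)) ((fderiv ℝ Kα (h t₁ s₂)).comp L) t₁ :=
      hKαd.hasFDerivAt.comp t₁ hinner
    have hsum : HasFDerivAt (fun s₁ => Kx s₁ s₂)
        ((fderiv ℝ Kα (h t₁ s₂)).comp L + fderiv ℝ Cf t₁) t₁ := by
      have hfun : (fun s₁ => Kx s₁ s₂) = fun s₁ => (Kα (h s₁ s₂) + Cf s₁) + Bf s₂ := by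
        funext s₁
        rw [hdec s₁ s₂]
        ring
      rw [hfun]
      exact (hhs.add hdCf.hasFDerivAt).add_const (Bf s₂)
    rw [hsum.fderiv]
    simp only [ContinuousLinearMap.add_apply, ContinuousLinearMap.coe_comp', Function.comp_apply]
    rw [hL1]
  -- Step B : outer derivative
  have hBfun : (fun s₂ => fderiv ℝ (fun s₁ => Kx s₁ s₂) t₁ (Pi.single m₁ 1))
      =ᶠ[𝓝 t₂] fun s₂ => fderiv ℝ Kα (h t₁ s₂) w + cC := hstepA
  rw [hBfun.fderiv_eq, fderiv_add_const]
  -- Step C : chain rule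
  have hfd2 : DifferentiableAt ℝ (fderiv ℝ Kα) u₀ :=
    (hsmoothα.fderiv_right (m := 1) (by norm_num)).differentiableAt one_ne_zero
  set f'' := fderiv ℝ (fderiv ℝ Kα) u₀ with hf''
  have hA : HasFDerivAt (fun u => fderiv ℝ Kα u w)
      ((ContinuousLinearMap.apply ℝ ℝ w).comp f'') u₀ :=
    (ContinuousLinearMap.apply ℝ ℝ w).hasFDerivAt.comp u₀ hfd2.hasFDerivAt
  have hAΦ : HasFDerivAt (fun s₂ => fderiv ℝ Kα (h t₁ s₂) w)
      (((ContinuousLinearMap.apply ℝ ℝ w).comp f'').comp Ψ) t₂ := hA.comp t₂ hΦ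
  rw [hAΦ.fderiv]
  simp only [ContinuousLinearMap.coe_comp', Function.comp_apply,
    ContinuousLinearMap.apply_apply]
  -- expand bilinearly
  have hterm : ∀ (i j : Fin K),
      fderiv ℝ (fun u => fderiv ℝ Kα u (Pi.single j 1)) u₀ (Pi.single i 1)
        = f'' (Pi.single i 1) (Pi.single j 1) := by
    intro i j
    have hAj : HasFDerivAt (fun u => fderiv ℝ Kα u (Pi.single j 1))
        ((ContinuousLinearMap.apply ℝ ℝ ((Pi.single j 1 : Fin K → ℝ))).comp f'') u₀ :=
      (ContinuousLinearMap.apply ℝ ℝ ((Pi.single j 1 : Fin K → ℝ))).hasFDerivAt.comp u₀ hfd2.hasFDerivAt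
    rw [hAj.fderiv]
    rfl
  have hv : Ψ (Pi.single m₂ 1) = ∑ j, (Real.exp (t₂ m₂) * D₂ m₂ j) • (Pi.single j 1 : Fin K → ℝ) := by
    funext k
    rw [hΨapp]
    simp [Pi.single_apply, mul_ite, Finset.sum_ite_eq', Finset.sum_apply, mul_comm]
  have hw : w = ∑ i, D₁ m₁ i • (Pi.single i 1 : Fin K → ℝ) := by
    funext k
    rw [hwdef]
    simp [Pi.single_apply, mul_ite, Finset.sum_ite_eq', Finset.sum_apply]
  have expand : ∀ (a b : Fin K → ℝ),
      f'' (∑ j, a j • (Pi.single j 1 : Fin K → ℝ)) (∑ i, b i • (Pi.single i 1 : Fin K → ℝ))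
        = ∑ i, b i * ∑ j, a j * f'' (Pi.single j 1 : Fin K → ℝ) ((Pi.single i 1 : Fin K → ℝ)) := by
    intro a b
    rw [_root_.map_sum]
    refine Finset.sum_congr rfl fun i _ => ?_
    rw [_root_.map_smul, smul_eq_mul]
    congr 1
    rw [_root_.map_sum, ContinuousLinearMap.sum_apply]
    refine Finset.sum_congr rfl fun j _ => ?_
    rw [_root_.map_smul, ContinuousLinearMap.smul_apply, smul_eq_mul]
  have hsymm : ∀ v v', f'' v v' = f'' v' v := hsmoothα.isSymmSndFDerivAt (by simp)
  rw [hv, hw, expand]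
  simp only [hterm, Finset.mul_sum]
  refine Finset.sum_congr rfl fun i _ => Finset.sum_congr rfl fun j _ => ?_
  rw [hsymm (Pi.single j 1) (Pi.single i 1)]
  ring
end
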